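/- For all sufficiently large n there exists a graph G on 2n−1 vertices such that: (a) |deg(v) − n| ≤ n^{0.6} for every vertex v; (b) ||N(v) ∩ N(w)| − n/2| ≤ n^{0.6} for every pair of distinct vertices v, w; and (c) |e(S, T) − |S||T|/2| ≤ n^{1.6} for all subsets S, T of the vertex set. -/

import Mathlib

open SimpleGraph

/-- `e(S,T)`: the number of ordered pairs `(v,w)` with `v ∈ S`, `w ∈ T` and `v` adjacent to `w`;
this counts edges with one end in `S` and the other in `T`, edges inside `S ∩ T` twice. -/
noncomputable def interCount {V : Type} (G : SimpleGraph V) (S T : Set V) : ℕ :=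
  {p : V × V | p.1 ∈ S ∧ p.2 ∈ T ∧ G.Adj p.1 p.2}.ncard

/-- The degree of a vertex. -/
noncomputable def degCount {V : Type} (G : SimpleGraph V) (v : V) : ℕ :=
  (G.neighborSet v).ncard

/-- The codegree of a pair of vertices. -/
noncomputable def codegCount {V : Type} (G : SimpleGraph V) (v w : V) : ℕ :=
  (G.neighborSet v ∩ G.neighborSet w).ncard

/-- A graph is `n`-fit if it has `2n-1` vertices, `⌈(n+1)(2n-1)/2⌉` edges, minimum degree
exactly `n+1`, all codegrees within `n^0.7` of `n/2`, and `|e(S,T) - |S||T|/2| ≤ n^1.7`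
for all vertex sets `S`, `T`. -/
def IsNFit {V : Type} (n : ℕ) (G : SimpleGraph V) : Prop :=
  Nat.card V = 2 * n - 1 ∧
  G.edgeSet.ncard = ((n + 1) * (2 * n - 1) + 1) / 2 ∧
  (∀ v : V, n + 1 ≤ degCount G v) ∧
  (∃ v : V, degCount G v = n + 1) ∧
  (∀ v w : V, v ≠ w → |(codegCount G v w : ℝ) - n / 2| ≤ (n : ℝ) ^ (0.7 : ℝ)) ∧
  (∀ S T : Set V, |(interCount G S T : ℝ) - S.ncard * T.ncard / 2| ≤ (n : ℝ) ^ (1.7 : ℝ))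

/-- `G` contains a cycle of length `m` (a copy of `C_m`). -/
def HasCycleLen {V : Type} (G : SimpleGraph V) (m : ℕ) : Prop :=
  ∃ (v : V) (c : G.Walk v v), c.IsCycle ∧ c.length = m

/-- `G` contains a path of length `k` (with `k` edges) joining `u` and `v`. -/
def HasPathLen {V : Type} (G : SimpleGraph V) (u v : V) (k : ℕ) : Prop :=
  ∃ p : G.Walk u v, p.IsPath ∧ p.length = k

/-- `G → (C_n, C_k)`: every red/blue coloring of the edges of `G` (the red edges forming a
subgraph `R ≤ G`, the blue ones being `G \ R`) yields a red `C_n` or a blue `C_k`. -/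
def ArrowsCC {V : Type} (G : SimpleGraph V) (n k : ℕ) : Prop :=
  ∀ R : SimpleGraph V, R ≤ G → HasCycleLen R n ∨ HasCycleLen (G \ R) k

/-- The density of a pair of vertex sets. -/
noncomputable def dens {V : Type} (G : SimpleGraph V) (S T : Set V) : ℝ :=
  (interCount G S T : ℝ) / (S.ncard * T.ncard)

/-- `(V1, V2)` is an `ε`-regular pair. -/
def IsRegularPair {V : Type} (G : SimpleGraph V) (ε : ℝ) (V1 V2 : Set V) : Prop :=
  ∀ W1 W2 : Set V, W1 ⊆ V1 → W2 ⊆ V2 →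
    ε * V1.ncard ≤ (W1.ncard : ℝ) → ε * V2.ncard ≤ (W2.ncard : ℝ) →
    |dens G V1 V2 - dens G W1 W2| ≤ ε

/-- `(V1, V2)` is a strongly `ε`-regular pair. -/
def IsStronglyRegularPair {V : Type} (G : SimpleGraph V) (ε : ℝ) (V1 V2 : Set V) : Prop :=
  IsRegularPair G ε V1 V2 ∧
  (∀ v ∈ V1, dens G V1 V2 * V2.ncard / 10 ≤ ((G.neighborSet v ∩ V2).ncard : ℝ)) ∧
  (∀ v ∈ V2, dens G V1 V2 * V1.ncard / 10 ≤ ((G.neighborSet v ∩ V1).ncard : ℝ))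

/-- A graph has property `M_t` if it contains a matching saturating `⌈t⌉` vertices which is
contained in a single non-bipartite connected component. -/
def PropertyM {V : Type} (H : SimpleGraph V) (t : ℝ) : Prop :=
  ∃ M : H.Subgraph, M.IsMatching ∧ ⌈t⌉ ≤ (M.verts.ncard : ℤ) ∧
    ∃ c : H.ConnectedComponent, M.verts ⊆ c.supp ∧ ¬ (H.induce c.supp).Colorable 2

namespace PRG

open Finset

variable {L : Type} [Fintype L] [DecidableEq L]

/-- flip one coordinate -/
def flip (e : L) (ω : L → Bool) : L → Bool := Function.update ω e (!(ω e))

lemma flip_self (e : L) (ω : L → Bool) : flip e ω e = !(ω e) := Function.update_self _ _ _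

lemma flip_ne (e a : L) (h : a ≠ e) (ω : L → Bool) : flip e ω a = ω a :=
  Function.update_of_ne h _ _

lemma flip_flip (e : L) (ω : L → Bool) : flip e (flip e ω) = ω := by
  funext a
  by_cases h : a = e
  · subst h; rw [flip_self, flip_self, Bool.not_not]
  · rw [flip_ne _ _ h, flip_ne _ _ h]

lemma sum_flip_eq_zero (e : L) (f : (L → Bool) → ℝ)
    (hf : ∀ ω, f (flip e ω) = - f ω) :
    ∑ ω : L → Bool, f ω = 0 := by
  refine Finset.sum_ninvolution (flip e) (fun ω => by rw [hf]; ring)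
    (fun ω _ => ?_) (fun ω => mem_univ _) (flip_flip e)
  intro hc
  have := congrFun hc e
  rw [flip_self] at this
  simp at this

lemma sum_mul_eq (p : L → Prop) [DecidablePred p] (f g : (L → Bool) → ℝ)
    (hf : ∀ ω₁ ω₂ : L → Bool, (∀ a, p a → ω₁ a = ω₂ a) → f ω₁ = f ω₂)
    (hg : ∀ ω₁ ω₂ : L → Bool, (∀ a, ¬ p a → ω₁ a = ω₂ a) → g ω₁ = g ω₂) :
    (∑ ω : L → Bool, f ω * g ω) * 2 ^ Fintype.card L
      = (∑ ω : L → Bool, f ω) * (∑ ω : L → Bool, g ω) := by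
  classical
  set E := Equiv.piEquivPiSubtypeProd p (fun _ : L => Bool) with hE
  have key : ∀ h : (L → Bool) → ℝ, ∑ ω : L → Bool, h ω
      = ∑ pr : (∀ _ : {a // p a}, Bool) × (∀ _ : {a // ¬ p a}, Bool), h (E.symm pr) :=
    fun h => (Equiv.sum_comp E.symm h).symm
  have hsymm : ∀ (σ : ∀ _ : {a // p a}, Bool) (τ : ∀ _ : {a // ¬ p a}, Bool) (a : L),
      E.symm (σ, τ) a = if h : p a then σ ⟨a, h⟩ else τ ⟨a, h⟩ := by
    intro σ τ a
    simp [hE, Equiv.piEquivPiSubtypeProd]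
  have hfσ : ∀ σ τ, f (E.symm (σ, τ)) = f (E.symm (σ, fun _ => false)) := by
    intro σ τ
    apply hf
    intro a ha
    rw [hsymm, hsymm, dif_pos ha, dif_pos ha]
  have hgτ : ∀ σ τ, g (E.symm (σ, τ)) = g (E.symm (fun _ => false, τ)) := by
    intro σ τ
    apply hg
    intro a ha
    rw [hsymm, hsymm, dif_neg ha, dif_neg ha]
  have cardeq : Fintype.card {a // p a} + Fintype.card {a // ¬ p a} = Fintype.card L := by
    rw [← Fintype.card_sum]
    exact Fintype.card_congr (Equiv.sumCompl p)
  rw [key (fun ω => f ω * g ω), key f, key g]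
  rw [Fintype.sum_prod_type, Fintype.sum_prod_type, Fintype.sum_prod_type]
  have h1 : ∑ σ, ∑ τ, f (E.symm (σ, τ)) * g (E.symm (σ, τ))
      = (∑ σ, f (E.symm (σ, fun _ => false))) * (∑ τ, g (E.symm (fun _ => false, τ))) := by
    rw [Finset.sum_mul_sum]
    refine Finset.sum_congr rfl fun σ _ => Finset.sum_congr rfl fun τ _ => ?_
    rw [hfσ σ τ, hgτ σ τ]
  have h2 : ∑ σ, ∑ τ, f (E.symm (σ, τ))
      = (∑ σ, f (E.symm (σ, fun _ => false))) * 2 ^ Fintype.card {a // ¬ p a} := by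
    rw [Finset.sum_mul]
    refine Finset.sum_congr rfl fun σ _ => ?_
    calc ∑ τ : {a // ¬ p a} → Bool, f (E.symm (σ, τ))
        = ∑ _τ : {a // ¬ p a} → Bool, f (E.symm (σ, fun _ => false)) :=
          Finset.sum_congr rfl fun τ _ => hfσ σ τ
      _ = (Fintype.card ({a // ¬ p a} → Bool)) * f (E.symm (σ, fun _ => false)) := by
          rw [Finset.sum_const, Finset.card_univ, nsmul_eq_mul]
      _ = f (E.symm (σ, fun _ => false)) * 2 ^ Fintype.card {a // ¬ p a} := by
          rw [Fintype.card_fun, Fintype.card_bool]; push_cast; ring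
  have h3 : ∑ σ, ∑ τ, g (E.symm (σ, τ))
      = (∑ τ, g (E.symm (fun _ => false, τ))) * 2 ^ Fintype.card {a // p a} := by
    rw [Finset.sum_comm, Finset.sum_mul]
    refine Finset.sum_congr rfl fun τ _ => ?_
    calc ∑ σ : {a // p a} → Bool, g (E.symm (σ, τ))
        = ∑ _σ : {a // p a} → Bool, g (E.symm (fun _ => false, τ)) :=
          Finset.sum_congr rfl fun σ _ => hgτ σ τ
      _ = (Fintype.card ({a // p a} → Bool)) * g (E.symm (fun _ => false, τ)) := by
          rw [Finset.sum_const, Finset.card_univ, nsmul_eq_mul]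
      _ = g (E.symm (fun _ => false, τ)) * 2 ^ Fintype.card {a // p a} := by
          rw [Fintype.card_fun, Fintype.card_bool]; push_cast; ring
  rw [h1, h2, h3, ← cardeq, pow_add]
  ring


lemma card_om : (Fintype.card ((L → Bool)) : ℝ) = 2 ^ Fintype.card L := by
  rw [Fintype.card_fun, Fintype.card_bool]; push_cast; ring

lemma sum_prod_eq {ι : Type} (s : Finset ι) (A : ι → Finset L) (F : ι → (L → Bool) → ℝ)
    (hdep : ∀ i ∈ s, ∀ ω₁ ω₂ : L → Bool, (∀ a ∈ A i, ω₁ a = ω₂ a) → F i ω₁ = F i ω₂)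
    (hdisj : ∀ i ∈ s, ∀ j ∈ s, i ≠ j → ∀ a ∈ A i, a ∉ A j) :
    ∑ ω : L → Bool, ∏ i ∈ s, F i ω
      = 2 ^ Fintype.card L * ∏ i ∈ s, ((∑ ω : L → Bool, F i ω) / 2 ^ Fintype.card L) := by
  classical
  induction s using Finset.induction_on with
  | empty =>
      simp only [Finset.prod_empty, mul_one]
      rw [Finset.sum_const, Finset.card_univ, nsmul_eq_mul, mul_one, card_om]
  | @insert j s hj ih =>
      have hN : (0:ℝ) < 2 ^ Fintype.card L := by positivity
      have hmul := sum_mul_eq (fun a => a ∈ A j) (F j) (fun ω => ∏ i ∈ s, F i ω)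
        (fun ω₁ ω₂ h => hdep j (mem_insert_self _ _) ω₁ ω₂ h)
        (fun ω₁ ω₂ h => Finset.prod_congr rfl fun i hi => by
          refine hdep i (mem_insert_of_mem hi) ω₁ ω₂ fun a ha => ?_
          refine h a ?_
          exact hdisj i (mem_insert_of_mem hi) j (mem_insert_self _ _)
            (fun he => hj (he ▸ hi)) a ha)
      have ihs := ih (fun i hi => hdep i (mem_insert_of_mem hi))
        (fun i hi j' hj' hne => hdisj i (mem_insert_of_mem hi) j' (mem_insert_of_mem hj') hne)
      simp only [Finset.prod_insert hj]
      have expand : ∑ ω : L → Bool, F j ω * ∏ i ∈ s, F i ω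
          = (∑ ω : L → Bool, F j ω) * (∑ ω : L → Bool, ∏ i ∈ s, F i ω) / 2 ^ Fintype.card L := by
        field_simp
        linarith [hmul]
      calc ∑ ω : L → Bool, F j ω * ∏ i ∈ s, F i ω
          = (∑ ω : L → Bool, F j ω) * (∑ ω : L → Bool, ∏ i ∈ s, F i ω) / 2 ^ Fintype.card L := expand
        _ = (∑ ω : L → Bool, F j ω) *
              (2 ^ Fintype.card L * ∏ i ∈ s, ((∑ ω : L → Bool, F i ω) / 2 ^ Fintype.card L))
              / 2 ^ Fintype.card L := by rw [ihs]
        _ = 2 ^ Fintype.card L * (((∑ ω : L → Bool, F j ω) / 2 ^ Fintype.card L) *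
              ∏ i ∈ s, ((∑ ω : L → Bool, F i ω) / 2 ^ Fintype.card L)) := by
            field_simp

lemma exp_le_quad {x : ℝ} (hx : x ≤ 1) : Real.exp x ≤ 1 + x + x ^ 2 := by
  rcases le_or_gt (-1) x with h | h
  · have habs : |x| ≤ 1 := abs_le.mpr ⟨h, hx⟩
    have hb := Real.exp_bound habs (n := 2) (by norm_num)
    have hsum : ∑ m ∈ Finset.range 2, x ^ m / m.factorial = 1 + x := by
      simp [Finset.sum_range_succ]
    rw [hsum] at hb
    have h1 : Real.exp x - (1 + x) ≤ |x| ^ 2 * ((2:ℕ).succ / ((2:ℕ).factorial * 2)) :=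
      le_trans (le_abs_self _) hb
    have h2 : |x| ^ 2 = x ^ 2 := sq_abs x
    have : ((2:ℕ).succ : ℝ) / ((2:ℕ).factorial * 2) = 3 / 4 := by norm_num [Nat.factorial]
    rw [this, h2] at h1
    nlinarith [sq_nonneg x]
  · have h1 : Real.exp x < 1 := by
      rw [← Real.exp_zero]
      exact Real.exp_lt_exp.mpr (by linarith)
    nlinarith [sq_nonneg x]

lemma chernoff_one {ι : Type} (s : Finset ι) (A : ι → Finset L) (F : ι → (L → Bool) → ℝ)
    (hdep : ∀ i ∈ s, ∀ ω₁ ω₂ : L → Bool, (∀ a ∈ A i, ω₁ a = ω₂ a) → F i ω₁ = F i ω₂)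
    (hdisj : ∀ i ∈ s, ∀ j ∈ s, i ≠ j → ∀ a ∈ A i, a ∉ A j)
    (hmean : ∀ i ∈ s, ∑ ω : L → Bool, F i ω = 0)
    (hb : ∀ i ∈ s, ∀ ω, |F i ω| ≤ 1) (lam t : ℝ) (hlam : 0 ≤ lam) (hlb : lam ≤ 1) :
    ((Finset.univ.filter (fun ω : L → Bool => t ≤ ∑ i ∈ s, F i ω)).card : ℝ)
      ≤ 2 ^ Fintype.card L * Real.exp (lam ^ 2 * s.card - lam * t) := by
  classical
  have hN : (0:ℝ) < 2 ^ Fintype.card L := by positivity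
  -- the moment generating function bound
  have factor_bound : ∀ i ∈ s, (∑ ω : L → Bool, Real.exp (lam * F i ω)) / 2 ^ Fintype.card L
      ≤ Real.exp (lam ^ 2) := by
    intro i hi
    have step : ∀ ω : L → Bool, Real.exp (lam * F i ω) ≤ 1 + lam * F i ω + lam ^ 2 * 1 := by
      intro ω
      have hx : lam * F i ω ≤ 1 := by
        calc lam * F i ω ≤ |lam * F i ω| := le_abs_self _
          _ = lam * |F i ω| := by rw [abs_mul, abs_of_nonneg hlam]
          _ ≤ lam * 1 := by
              exact mul_le_mul_of_nonneg_left (hb i hi ω) hlam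
          _ ≤ 1 := by linarith
      refine (exp_le_quad hx).trans ?_
      have h3 : (F i ω) ^ 2 ≤ 1 := by
        rw [← sq_abs]
        nlinarith [hb i hi ω, abs_nonneg (F i ω)]
      have : (lam * F i ω) ^ 2 ≤ lam ^ 2 * 1 := by nlinarith [sq_nonneg lam]
      linarith
    have hsumle : ∑ ω : L → Bool, Real.exp (lam * F i ω)
        ≤ ∑ ω : L → Bool, (1 + lam * F i ω + lam ^ 2 * 1) := Finset.sum_le_sum fun ω _ => step ω
    have hsumr : ∑ ω : L → Bool, (1 + lam * F i ω + lam ^ 2 * 1)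
        = 2 ^ Fintype.card L * (1 + lam ^ 2) := by
      rw [Finset.sum_add_distrib, Finset.sum_add_distrib, ← Finset.mul_sum, hmean i hi,
        Finset.sum_const, Finset.card_univ, nsmul_eq_mul, mul_one, Finset.sum_const,
        Finset.card_univ, nsmul_eq_mul, card_om]
      ring
    rw [div_le_iff₀ hN]
    calc ∑ ω : L → Bool, Real.exp (lam * F i ω) ≤ 2 ^ Fintype.card L * (1 + lam ^ 2) := by
          rw [← hsumr]; exact hsumle
      _ ≤ Real.exp (lam ^ 2) * 2 ^ Fintype.card L := by
          have := Real.add_one_le_exp (lam ^ 2)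
          nlinarith
  have mgf : ∑ ω : L → Bool, Real.exp (lam * ∑ i ∈ s, F i ω)
      ≤ 2 ^ Fintype.card L * Real.exp (lam ^ 2 * s.card) := by
    have eq1 : ∀ ω : L → Bool, Real.exp (lam * ∑ i ∈ s, F i ω)
        = ∏ i ∈ s, Real.exp (lam * F i ω) := by
      intro ω
      rw [Finset.mul_sum, Real.exp_sum]
    calc ∑ ω : L → Bool, Real.exp (lam * ∑ i ∈ s, F i ω)
        = ∑ ω : L → Bool, ∏ i ∈ s, Real.exp (lam * F i ω) :=
          Finset.sum_congr rfl fun ω _ => eq1 ω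
      _ = 2 ^ Fintype.card L *
            ∏ i ∈ s, ((∑ ω : L → Bool, Real.exp (lam * F i ω)) / 2 ^ Fintype.card L) := by
          refine sum_prod_eq s A _ ?_ hdisj
          intro i hi ω₁ ω₂ h
          rw [hdep i hi ω₁ ω₂ h]
      _ ≤ 2 ^ Fintype.card L * ∏ i ∈ s, Real.exp (lam ^ 2) := by
          refine mul_le_mul_of_nonneg_left ?_ (le_of_lt hN)
          refine Finset.prod_le_prod (fun i hi => ?_) factor_bound
          positivity
      _ = 2 ^ Fintype.card L * Real.exp (lam ^ 2 * s.card) := by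
          rw [Finset.prod_const, ← Real.exp_nat_mul]
          ring_nf
  have count : ((Finset.univ.filter (fun ω : L → Bool => t ≤ ∑ i ∈ s, F i ω)).card : ℝ)
      * Real.exp (lam * t) ≤ ∑ ω : L → Bool, Real.exp (lam * ∑ i ∈ s, F i ω) := by
    set B := Finset.univ.filter (fun ω : L → Bool => t ≤ ∑ i ∈ s, F i ω) with hB
    have h1 : ∀ ω ∈ B, Real.exp (lam * t) ≤ Real.exp (lam * ∑ i ∈ s, F i ω) := by
      intro ω hω
      rw [hB, Finset.mem_filter] at hω
      exact Real.exp_le_exp.mpr (mul_le_mul_of_nonneg_left hω.2 hlam)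
    calc (B.card : ℝ) * Real.exp (lam * t) = ∑ _ω ∈ B, Real.exp (lam * t) := by
          rw [Finset.sum_const, nsmul_eq_mul]
      _ ≤ ∑ ω ∈ B, Real.exp (lam * ∑ i ∈ s, F i ω) := Finset.sum_le_sum h1
      _ ≤ ∑ ω : L → Bool, Real.exp (lam * ∑ i ∈ s, F i ω) := by
          refine Finset.sum_le_sum_of_subset_of_nonneg (Finset.subset_univ _) ?_
          intro ω _ _; positivity
  have hexp : (0:ℝ) < Real.exp (lam * t) := Real.exp_pos _
  rw [← le_div_iff₀ hexp] at count
  refine count.trans ?_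
  rw [div_le_iff₀ hexp]
  refine mgf.trans (le_of_eq ?_)
  rw [mul_assoc, ← Real.exp_add]
  ring_nf

lemma chernoff_two {ι : Type} (s : Finset ι) (A : ι → Finset L) (F : ι → (L → Bool) → ℝ)
    (hdep : ∀ i ∈ s, ∀ ω₁ ω₂ : L → Bool, (∀ a ∈ A i, ω₁ a = ω₂ a) → F i ω₁ = F i ω₂)
    (hdisj : ∀ i ∈ s, ∀ j ∈ s, i ≠ j → ∀ a ∈ A i, a ∉ A j)
    (hmean : ∀ i ∈ s, ∑ ω : L → Bool, F i ω = 0)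
    (hb : ∀ i ∈ s, ∀ ω, |F i ω| ≤ 1) (lam t : ℝ) (hlam : 0 ≤ lam) (hlb : lam ≤ 1) :
    ((Finset.univ.filter (fun ω : L → Bool => ¬ |∑ i ∈ s, F i ω| ≤ t)).card : ℝ)
      ≤ 2 * (2 ^ Fintype.card L * Real.exp (lam ^ 2 * s.card - lam * t)) := by
  classical
  have hsub : (Finset.univ.filter (fun ω : L → Bool => ¬ |∑ i ∈ s, F i ω| ≤ t))
      ⊆ (Finset.univ.filter (fun ω : L → Bool => t ≤ ∑ i ∈ s, F i ω))
        ∪ (Finset.univ.filter (fun ω : L → Bool => t ≤ ∑ i ∈ s, (fun i ω => - F i ω) i ω)) := by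
    intro ω hω
    rw [Finset.mem_filter] at hω
    rw [Finset.mem_union, Finset.mem_filter, Finset.mem_filter]
    have h' : t < |∑ i ∈ s, F i ω| := not_le.mp hω.2
    rcases lt_abs.mp h' with h | h
    · exact Or.inl ⟨Finset.mem_univ _, le_of_lt h⟩
    · refine Or.inr ⟨Finset.mem_univ _, ?_⟩
      simp only [Finset.sum_neg_distrib]
      linarith
  have h1 := chernoff_one s A F hdep hdisj hmean hb lam t hlam hlb
  have h2 := chernoff_one s A (fun i ω => - F i ω)
    (fun i hi ω₁ ω₂ h => by rw [hdep i hi ω₁ ω₂ h])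
    hdisj
    (fun i hi => by rw [Finset.sum_neg_distrib, hmean i hi, neg_zero])
    (fun i hi ω => by rw [abs_neg]; exact hb i hi ω) lam t hlam hlb
  have hcard := Finset.card_le_card hsub
  have hcard2 := Finset.card_union_le
    (Finset.univ.filter (fun ω : L → Bool => t ≤ ∑ i ∈ s, F i ω))
    (Finset.univ.filter (fun ω : L → Bool => t ≤ ∑ i ∈ s, (fun i ω => - F i ω) i ω))
  have : ((Finset.univ.filter (fun ω : L → Bool => ¬ |∑ i ∈ s, F i ω| ≤ t)).card : ℝ)
      ≤ ((Finset.univ.filter (fun ω : L → Bool => t ≤ ∑ i ∈ s, F i ω)).card : ℝ)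
        + ((Finset.univ.filter (fun ω : L → Bool =>
            t ≤ ∑ i ∈ s, (fun i ω => - F i ω) i ω)).card : ℝ) := by
    push_cast
    exact_mod_cast le_trans (Nat.cast_le.mpr hcard) (Nat.cast_le.mpr hcard2)
  linarith

/-! ### Part B: the random graph -/

abbrev Ed (m : ℕ) := {p : Fin m × Fin m // p.1 < p.2}

variable {m : ℕ}

def pe (x y : Fin m) (h : x ≠ y) : Ed m :=
  if hl : x < y then ⟨(x, y), hl⟩ else ⟨(y, x), h.lt_or_gt.resolve_left hl⟩

def ed (ω : Ed m → Bool) (x y : Fin m) : Bool :=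
  if hl : x < y then ω ⟨(x, y), hl⟩ else if hg : y < x then ω ⟨(y, x), hg⟩ else false

lemma ed_eq_pe (ω : Ed m → Bool) {x y : Fin m} (h : x ≠ y) : ed ω x y = ω (pe x y h) := by
  unfold ed pe
  rcases h.lt_or_gt with hl | hl
  · rw [dif_pos hl, dif_pos hl]
  · rw [dif_neg (asymm hl), dif_neg (asymm hl), dif_pos hl]

lemma pe_val {x y : Fin m} (h : x ≠ y) : (pe x y h).1 = (x, y) ∨ (pe x y h).1 = (y, x) := by
  unfold pe
  split
  · exact Or.inl rfl
  · exact Or.inr rfl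

lemma pe_symm {x y : Fin m} (h : x ≠ y) : pe x y h = pe y x h.symm := by
  unfold pe
  rcases h.lt_or_gt with hl | hl
  · rw [dif_pos hl, dif_neg (asymm hl)]
  · rw [dif_neg (asymm hl), dif_pos hl]

lemma ed_symm (ω : Ed m → Bool) (x y : Fin m) : ed ω x y = ed ω y x := by
  by_cases h : x = y
  · subst h; rfl
  · rw [ed_eq_pe ω h, ed_eq_pe ω (Ne.symm h), pe_symm h]

lemma pe_eq_self (e : Ed m) : pe e.1.1 e.1.2 (ne_of_lt e.2) = e := by
  unfold pe
  rw [dif_pos e.2]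

lemma ed_fst_snd (ω : Ed m → Bool) (e : Ed m) : ed ω e.1.1 e.1.2 = ω e := by
  rw [ed_eq_pe ω (ne_of_lt e.2), pe_eq_self]

def Gg (ω : Ed m → Bool) : SimpleGraph (Fin m) where
  Adj x y := x ≠ y ∧ ed ω x y = true
  symm := by
    constructor
    intro x y ⟨h1, h2⟩
    exact ⟨h1.symm, by rwa [ed_symm]⟩
  loopless := ⟨fun x ⟨h, _⟩ => h rfl⟩

lemma gg_adj (ω : Ed m → Bool) (x y : Fin m) :
    (Gg ω).Adj x y ↔ x ≠ y ∧ ed ω x y = true := Iff.rfl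

/-- the edge coordinates governing the pair `x,y` -/
def Af (x y : Fin m) : Finset (Ed m) :=
  Finset.univ.filter (fun e => e.1 = (x, y) ∨ e.1 = (y, x))

lemma pe_mem_Af {x y : Fin m} (h : x ≠ y) : pe x y h ∈ Af x y := by
  rw [Af, Finset.mem_filter]
  exact ⟨Finset.mem_univ _, pe_val h⟩

lemma mem_Af {x y : Fin m} {e : Ed m} : e ∈ Af x y ↔ e.1 = (x, y) ∨ e.1 = (y, x) := by
  rw [Af, Finset.mem_filter]
  simp

lemma ed_congr {ω₁ ω₂ : Ed m → Bool} {x y : Fin m} (h : x ≠ y)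
    (hω : ∀ e ∈ Af x y, ω₁ e = ω₂ e) : ed ω₁ x y = ed ω₂ x y := by
  rw [ed_eq_pe ω₁ h, ed_eq_pe ω₂ h]
  exact hω _ (pe_mem_Af h)

lemma ed_flip_self (ω : Ed m → Bool) {x y : Fin m} (h : x ≠ y) :
    ed (flip (pe x y h) ω) x y = !(ed ω x y) := by
  rw [ed_eq_pe _ h, ed_eq_pe _ h, flip_self]

lemma ed_flip_other (ω : Ed m → Bool) {x y : Fin m} (h : x ≠ y) {e : Ed m}
    (hne : e ≠ pe x y h) : ed (flip e ω) x y = ed ω x y := by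
  rw [ed_eq_pe _ h, ed_eq_pe _ h, flip_ne _ _ (Ne.symm hne)]

noncomputable def hh (b : Bool) : ℝ := (if b then 1 else 0) - 1 / 2

lemma hh_not (b : Bool) : hh (!b) = - hh b := by cases b <;> norm_num [hh]

lemma abs_hh (b : Bool) : |hh b| ≤ 1 / 2 := by
  cases b <;> rw [abs_le] <;> constructor <;> norm_num [hh]

/-! converting the graph statistics to sums -/

lemma deg_eq (ω : Ed m → Bool) (v : Fin m) :
    (degCount (Gg ω) v : ℝ) = ∑ x ∈ Finset.univ.erase v, (if ed ω v x then (1:ℝ) else 0) := by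
  classical
  have hset : (Gg ω).neighborSet v
      = ↑((Finset.univ.erase v).filter (fun x => ed ω v x = true)) := by
    ext x
    simp only [SimpleGraph.mem_neighborSet, gg_adj, Finset.coe_filter, Finset.mem_erase,
      Finset.mem_univ, and_true, Set.mem_setOf_eq]
    constructor
    · rintro ⟨h1, h2⟩; exact ⟨Ne.symm h1, h2⟩
    · rintro ⟨h1, h2⟩; exact ⟨Ne.symm h1, h2⟩
  rw [degCount, hset, Set.ncard_coe_finset, Finset.card_filter]
  push_cast
  rfl

lemma codeg_eq (ω : Ed m → Bool) (v w : Fin m) :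
    (codegCount (Gg ω) v w : ℝ) = ∑ x ∈ (Finset.univ.erase v).erase w,
      (if (ed ω v x && ed ω w x) then (1:ℝ) else 0) := by
  classical
  have hset : (Gg ω).neighborSet v ∩ (Gg ω).neighborSet w
      = ↑(((Finset.univ.erase v).erase w).filter (fun x => (ed ω v x && ed ω w x) = true)) := by
    ext x
    simp only [Set.mem_inter_iff, SimpleGraph.mem_neighborSet, gg_adj, Finset.coe_filter,
      Finset.mem_erase, Finset.mem_univ, and_true, Set.mem_setOf_eq, Bool.and_eq_true]
    constructor
    · rintro ⟨⟨h1, h2⟩, ⟨h3, h4⟩⟩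
      exact ⟨⟨Ne.symm h3, Ne.symm h1⟩, h2, h4⟩
    · rintro ⟨⟨h1, h2⟩, h3, h4⟩
      exact ⟨⟨Ne.symm h2, h3⟩, ⟨Ne.symm h1, h4⟩⟩
  rw [codegCount, hset, Set.ncard_coe_finset, Finset.card_filter]
  push_cast
  rfl

lemma pair_sum (g : Fin m → Fin m → ℝ) (hdiag : ∀ x, g x x = 0) :
    ∑ p : Fin m × Fin m, g p.1 p.2 = ∑ e : Ed m, (g e.1.1 e.1.2 + g e.1.2 e.1.1) := by
  classical
  have split1 := Finset.sum_filter_add_sum_filter_not (Finset.univ : Finset (Fin m × Fin m))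
    (fun p => p.1 < p.2) (fun p => g p.1 p.2)
  have split2 := Finset.sum_filter_add_sum_filter_not
    ((Finset.univ : Finset (Fin m × Fin m)).filter (fun p => ¬ p.1 < p.2))
    (fun p => p.2 < p.1) (fun p => g p.1 p.2)
  have hdiag0 : ∑ p ∈ (((Finset.univ : Finset (Fin m × Fin m)).filter
      (fun p => ¬ p.1 < p.2)).filter (fun p => ¬ p.2 < p.1)), g p.1 p.2 = 0 := by
    refine Finset.sum_eq_zero fun p hp => ?_
    simp only [Finset.mem_filter, not_lt] at hp
    have : p.1 = p.2 := le_antisymm hp.2 hp.1.2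
    rw [← this, hdiag]
  have hBA : ∑ p ∈ (((Finset.univ : Finset (Fin m × Fin m)).filter
        (fun p => ¬ p.1 < p.2)).filter (fun p => p.2 < p.1)), g p.1 p.2
      = ∑ p ∈ ((Finset.univ : Finset (Fin m × Fin m)).filter (fun p => p.1 < p.2)),
        g p.2 p.1 := by
    refine Finset.sum_bij' (fun p _ => p.swap) (fun p _ => p.swap) ?_ ?_ ?_ ?_ ?_
    · intro p hp
      simp only [Finset.mem_filter, not_lt] at hp ⊢
      exact ⟨Finset.mem_univ _, hp.2⟩
    · intro p hp
      simp only [Finset.mem_filter, not_lt] at hp ⊢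
      exact ⟨⟨Finset.mem_univ _, le_of_lt hp.2⟩, hp.2⟩
    · intro p _; rfl
    · intro p _; rfl
    · intro p _; rfl
  have hsubA : ∀ (f : Fin m × Fin m → ℝ),
      ∑ p ∈ ((Finset.univ : Finset (Fin m × Fin m)).filter (fun p => p.1 < p.2)), f p
        = ∑ e : Ed m, f e.1 := by
    intro f
    rw [Finset.sum_subtype (p := fun p : Fin m × Fin m => p.1 < p.2)
      ((Finset.univ : Finset (Fin m × Fin m)).filter (fun p => p.1 < p.2))
      (fun p => by simp) f]
  calc ∑ p : Fin m × Fin m, g p.1 p.2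
      = ∑ p ∈ ((Finset.univ : Finset (Fin m × Fin m)).filter (fun p => p.1 < p.2)), g p.1 p.2
        + ∑ p ∈ ((Finset.univ : Finset (Fin m × Fin m)).filter (fun p => p.1 < p.2)),
          g p.2 p.1 := by
        rw [← split1, ← split2, hdiag0, add_zero, hBA]
    _ = ∑ e : Ed m, (g e.1.1 e.1.2 + g e.1.2 e.1.1) := by
        rw [hsubA (fun p => g p.1 p.2), hsubA (fun p => g p.2 p.1), ← Finset.sum_add_distrib]

open Classical in
/-- weight of an edge coordinate w.r.t. the pair of sets `S`, `T` -/
noncomputable def aw (S T : Set (Fin m)) (e : Ed m) : ℝ :=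
  (if e.1.1 ∈ S then 1 else 0) * (if e.1.2 ∈ T then 1 else 0)
    + (if e.1.2 ∈ S then 1 else 0) * (if e.1.1 ∈ T then 1 else 0)

lemma aw_nonneg (S T : Set (Fin m)) (e : Ed m) : 0 ≤ aw S T e := by
  unfold aw; positivity

lemma aw_le_two (S T : Set (Fin m)) (e : Ed m) : aw S T e ≤ 2 := by
  unfold aw
  split_ifs <;> norm_num

open Classical in
lemma inter_eq (ω : Ed m → Bool) (S T : Set (Fin m)) :
    (interCount (Gg ω) S T : ℝ) = ∑ e : Ed m, (if ω e then aw S T e else 0) := by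
  have hset : {p : Fin m × Fin m | p.1 ∈ S ∧ p.2 ∈ T ∧ (Gg ω).Adj p.1 p.2}
      = ↑((Finset.univ : Finset (Fin m × Fin m)).filter
          (fun p => p.1 ∈ S ∧ p.2 ∈ T ∧ (Gg ω).Adj p.1 p.2)) := by
    ext p
    simp
  rw [interCount, hset, Set.ncard_coe_finset, Finset.card_filter]
  push_cast
  have : ∑ p : Fin m × Fin m,
      (if p.1 ∈ S ∧ p.2 ∈ T ∧ (Gg ω).Adj p.1 p.2 then (1:ℝ) else 0)
      = ∑ e : Ed m, (if ω e then aw S T e else 0) := by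
    rw [pair_sum (fun x y => if x ∈ S ∧ y ∈ T ∧ (Gg ω).Adj x y then (1:ℝ) else 0)
      (fun x => by simp)]
    refine Finset.sum_congr rfl fun e _ => ?_
    have hne : e.1.1 ≠ e.1.2 := ne_of_lt e.2
    have hadj : (Gg ω).Adj e.1.1 e.1.2 ↔ ω e = true := by
      rw [gg_adj, ed_fst_snd]
      exact ⟨fun h => h.2, fun h => ⟨hne, h⟩⟩
    have hadj' : (Gg ω).Adj e.1.2 e.1.1 ↔ ω e = true := by
      rw [gg_adj, ed_symm, ed_fst_snd]
      exact ⟨fun h => h.2, fun h => ⟨Ne.symm hne, h⟩⟩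
    by_cases hω : ω e = true
    · rw [if_pos hω]
      unfold aw
      by_cases h1 : e.1.1 ∈ S <;> by_cases h2 : e.1.2 ∈ T <;> by_cases h3 : e.1.2 ∈ S <;>
        by_cases h4 : e.1.1 ∈ T <;>
        simp [h1, h2, h3, h4, hadj, hadj', hω]
    · rw [if_neg hω]
      have : ¬ (Gg ω).Adj e.1.1 e.1.2 := fun h => hω (hadj.mp h)
      have h2 : ¬ (Gg ω).Adj e.1.2 e.1.1 := fun h => hω (hadj'.mp h)
      simp [this, h2]
  rw [← this]

open Classical in
lemma ncard_sum (S : Set (Fin m)) : (S.ncard : ℝ) = ∑ x : Fin m, (if x ∈ S then (1:ℝ) else 0) := by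
  have hset : S = ↑((Finset.univ : Finset (Fin m)).filter (fun x => x ∈ S)) := by
    ext x; simp
  rw [hset, Set.ncard_coe_finset, Finset.card_filter]
  push_cast
  simp

open Classical in
lemma sum_aw (S T : Set (Fin m)) :
    ∑ e : Ed m, aw S T e = (S.ncard : ℝ) * T.ncard
      - ∑ x : Fin m, ((if x ∈ S then (1:ℝ) else 0) * (if x ∈ T then (1:ℝ) else 0)) := by
  have key := pair_sum (m := m) (fun x y => if x = y then 0 else
    (if x ∈ S then (1:ℝ) else 0) * (if y ∈ T then (1:ℝ) else 0)) (fun x => by simp)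
  have lhs_eq : ∑ p : Fin m × Fin m, (if p.1 = p.2 then 0 else
      (if p.1 ∈ S then (1:ℝ) else 0) * (if p.2 ∈ T then (1:ℝ) else 0))
      = (S.ncard : ℝ) * T.ncard
        - ∑ x : Fin m, ((if x ∈ S then (1:ℝ) else 0) * (if x ∈ T then (1:ℝ) else 0)) := by
    have h1 : ∀ p : Fin m × Fin m, (if p.1 = p.2 then 0 else
        (if p.1 ∈ S then (1:ℝ) else 0) * (if p.2 ∈ T then (1:ℝ) else 0))
        = (if p.1 ∈ S then (1:ℝ) else 0) * (if p.2 ∈ T then (1:ℝ) else 0)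
          - (if p.1 = p.2 then (if p.1 ∈ S then (1:ℝ) else 0) * (if p.2 ∈ T then (1:ℝ) else 0)
            else 0) := by
      intro p
      by_cases h : p.1 = p.2 <;> simp [h]
    rw [Finset.sum_congr rfl (fun p _ => h1 p), Finset.sum_sub_distrib]
    congr 1
    · rw [ncard_sum S, ncard_sum T, Finset.sum_mul_sum, Fintype.sum_prod_type]
    · rw [Fintype.sum_prod_type]
      refine Finset.sum_congr rfl fun x _ => ?_
      simp
  have rhs_eq : ∑ e : Ed m, ((fun x y => if x = y then 0 else
      (if x ∈ S then (1:ℝ) else 0) * (if y ∈ T then (1:ℝ) else 0)) e.1.1 e.1.2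
      + (fun x y => if x = y then 0 else
      (if x ∈ S then (1:ℝ) else 0) * (if y ∈ T then (1:ℝ) else 0)) e.1.2 e.1.1)
      = ∑ e : Ed m, aw S T e := by
    refine Finset.sum_congr rfl fun e _ => ?_
    have hne : e.1.1 ≠ e.1.2 := ne_of_lt e.2
    simp only [if_neg hne, if_neg (Ne.symm hne)]
    unfold aw
    ring
  rw [← lhs_eq, key, rhs_eq]

lemma two_card_Ed : 2 * Fintype.card (Ed m) = m * m - m := by
  classical
  have hA : Fintype.card (Ed m)
      = ((Finset.univ : Finset (Fin m × Fin m)).filter (fun p => p.1 < p.2)).card :=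
    Fintype.card_subtype _
  have hsplit1 := Finset.card_filter_add_card_filter_not
    (s := (Finset.univ : Finset (Fin m × Fin m))) (p := fun p => p.1 < p.2)
  have hsplit2 := Finset.card_filter_add_card_filter_not
    (s := (Finset.univ : Finset (Fin m × Fin m)).filter (fun p => ¬ p.1 < p.2))
    (p := fun p => p.2 < p.1)
  have hB : (((Finset.univ : Finset (Fin m × Fin m)).filter (fun p => ¬ p.1 < p.2)).filter
      (fun p => p.2 < p.1)).card
      = ((Finset.univ : Finset (Fin m × Fin m)).filter (fun p => p.1 < p.2)).card := by
    refine Finset.card_bij' (fun p _ => p.swap) (fun p _ => p.swap) ?_ ?_ ?_ ?_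
    · intro p hp
      simp only [Finset.mem_filter] at hp ⊢
      exact ⟨Finset.mem_univ _, hp.2⟩
    · intro p hp
      simp only [Finset.mem_filter] at hp ⊢
      exact ⟨⟨Finset.mem_univ _, not_lt.mpr (le_of_lt hp.2)⟩, hp.2⟩
    · intro p _; rfl
    · intro p _; rfl
  have hC : (((Finset.univ : Finset (Fin m × Fin m)).filter (fun p => ¬ p.1 < p.2)).filter
      (fun p => ¬ p.2 < p.1)).card = m := by
    have heq : (((Finset.univ : Finset (Fin m × Fin m)).filter (fun p => ¬ p.1 < p.2)).filter
        (fun p => ¬ p.2 < p.1)).card = (Finset.univ : Finset (Fin m)).card := by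
      refine Finset.card_bij' (fun p _ => p.1) (fun x _ => (x, x)) ?_ ?_ ?_ ?_
      · intro p _; exact Finset.mem_univ _
      · intro x _
        simp only [Finset.mem_filter]
        exact ⟨⟨Finset.mem_univ _, lt_irrefl _⟩, lt_irrefl _⟩
      · intro p hp
        simp only [Finset.mem_filter, not_lt] at hp
        have h12 : p.1 = p.2 := le_antisymm hp.2 hp.1.2
        exact Prod.ext rfl h12
      · intro x _; rfl
    rw [heq, Finset.card_univ, Fintype.card_fin]
  have huniv : (Finset.univ : Finset (Fin m × Fin m)).card = m * m := by
    rw [Finset.card_univ, Fintype.card_prod, Fintype.card_fin]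
  omega

open Classical in
lemma card_badDeg (hm : 1 ≤ m) (v : Fin m) (lam t : ℝ) (hlam : 0 ≤ lam) (hlb : lam ≤ 1) :
    ((Finset.univ.filter (fun ω : Ed m → Bool =>
        ¬ |(degCount (Gg ω) v : ℝ) - ((m:ℝ) - 1) / 2| ≤ t)).card : ℝ)
      ≤ 2 * (2 ^ Fintype.card (Ed m) * Real.exp (lam ^ 2 * ((m:ℝ) - 1) - lam * t)) := by
  classical
  set s : Finset (Fin m) := Finset.univ.erase v with hs
  have hcard : s.card = m - 1 := by
    rw [hs, Finset.card_erase_of_mem (Finset.mem_univ v), Finset.card_univ, Fintype.card_fin]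
  set F : Fin m → (Ed m → Bool) → ℝ := fun x ω => hh (ed ω v x) with hF
  have hsum : ∀ ω : Ed m → Bool, ∑ x ∈ s, F x ω
      = (degCount (Gg ω) v : ℝ) - ((m:ℝ) - 1) / 2 := by
    intro ω
    have : ∑ x ∈ s, F x ω
        = ∑ x ∈ s, ((if ed ω v x then (1:ℝ) else 0) - 1 / 2) := rfl
    rw [this, Finset.sum_sub_distrib, Finset.sum_const, hcard, nsmul_eq_mul, deg_eq]
    have : ((m - 1 : ℕ) : ℝ) = (m:ℝ) - 1 := by
      push_cast [hm]; ring
    rw [this]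
    ring
  have hfilter : (Finset.univ.filter (fun ω : Ed m → Bool =>
      ¬ |(degCount (Gg ω) v : ℝ) - ((m:ℝ) - 1) / 2| ≤ t))
      = (Finset.univ.filter (fun ω : Ed m → Bool => ¬ |∑ x ∈ s, F x ω| ≤ t)) := by
    refine Finset.filter_congr fun ω _ => ?_
    rw [hsum ω]
  rw [hfilter]
  have hbnd := chernoff_two s (fun x => Af v x) F
    (fun x hx ω₁ ω₂ h => by
      simp only [hF]
      have hvx : v ≠ x := Ne.symm (Finset.mem_erase.mp hx).1
      rw [ed_congr hvx h])
    (fun i hi j hj hne a hai haj => by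
      rw [mem_Af] at hai haj
      have hi' : i ≠ v := (Finset.mem_erase.mp hi).1
      have hj' : j ≠ v := (Finset.mem_erase.mp hj).1
      rcases hai with h | h <;> rcases haj with h' | h' <;>
        rw [h] at h' <;> simp only [Prod.ext_iff] at h' <;> simp_all)
    (fun x hx => by
      have hvx : v ≠ x := Ne.symm (Finset.mem_erase.mp hx).1
      refine sum_flip_eq_zero (pe v x hvx) _ fun ω => ?_
      simp only [hF]
      rw [ed_flip_self ω hvx, hh_not])
    (fun x hx ω => le_trans (abs_hh _) (by norm_num))
    lam t hlam hlb
  refine hbnd.trans ?_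
  rw [hcard]
  have : ((m - 1 : ℕ) : ℝ) = (m:ℝ) - 1 := by push_cast [hm]; ring
  rw [this]

lemma pe_ne_pe {v w x : Fin m} (h1 : v ≠ x) (h2 : w ≠ x) (hvw : v ≠ w) :
    pe v x h1 ≠ pe w x h2 := by
  intro h
  have hval := congrArg Subtype.val h
  rcases pe_val h1 with hv | hv <;> rcases pe_val h2 with hw | hw <;>
    rw [hv, hw] at hval <;> simp only [Prod.ext_iff] at hval <;> simp_all

open Classical in
lemma card_badCodeg (hm : 2 ≤ m) (v w : Fin m) (hvw : v ≠ w) (lam t : ℝ)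
    (hlam : 0 ≤ lam) (hlb : lam ≤ 1) :
    ((Finset.univ.filter (fun ω : Ed m → Bool =>
        ¬ |(codegCount (Gg ω) v w : ℝ) - ((m:ℝ) - 2) / 4| ≤ t)).card : ℝ)
      ≤ 2 * (2 ^ Fintype.card (Ed m) * Real.exp (lam ^ 2 * ((m:ℝ) - 2) - lam * t)) := by
  classical
  set s : Finset (Fin m) := (Finset.univ.erase v).erase w with hs
  have hcard : s.card = m - 2 := by
    rw [hs, Finset.card_erase_of_mem, Finset.card_erase_of_mem (Finset.mem_univ v),
      Finset.card_univ, Fintype.card_fin]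
    · rfl
    · exact Finset.mem_erase.mpr ⟨hvw.symm, Finset.mem_univ w⟩
  have hmem : ∀ x ∈ s, v ≠ x ∧ w ≠ x := by
    intro x hx
    rw [hs, Finset.mem_erase, Finset.mem_erase] at hx
    exact ⟨Ne.symm hx.2.1, Ne.symm hx.1⟩
  set F : Fin m → (Ed m → Bool) → ℝ := fun x ω =>
    hh (ed ω v x) * hh (ed ω w x) + hh (ed ω v x) / 2 + hh (ed ω w x) / 2 with hF
  have hFval : ∀ x ω, F x ω = (if (ed ω v x && ed ω w x) then (1:ℝ) else 0) - 1 / 4 := by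
    intro x ω
    simp only [hF]
    cases hb1 : ed ω v x <;> cases hb2 : ed ω w x <;> norm_num [hh]
  have hsum : ∀ ω : Ed m → Bool, ∑ x ∈ s, F x ω
      = (codegCount (Gg ω) v w : ℝ) - ((m:ℝ) - 2) / 4 := by
    intro ω
    rw [Finset.sum_congr rfl (fun x _ => hFval x ω), Finset.sum_sub_distrib,
      Finset.sum_const, hcard, nsmul_eq_mul, codeg_eq, hs]
    have : ((m - 2 : ℕ) : ℝ) = (m:ℝ) - 2 := by push_cast [hm]; ring
    rw [this]
    ring
  have hfilter : (Finset.univ.filter (fun ω : Ed m → Bool =>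
      ¬ |(codegCount (Gg ω) v w : ℝ) - ((m:ℝ) - 2) / 4| ≤ t))
      = (Finset.univ.filter (fun ω : Ed m → Bool => ¬ |∑ x ∈ s, F x ω| ≤ t)) := by
    refine Finset.filter_congr fun ω _ => ?_
    rw [hsum ω]
  rw [hfilter]
  have hbnd := chernoff_two s (fun x => Af v x ∪ Af w x) F
    (fun x hx ω₁ ω₂ h => by
      obtain ⟨hvx, hwx⟩ := hmem x hx
      simp only [hF]
      rw [ed_congr hvx (fun e he => h e (Finset.mem_union_left _ he)),
        ed_congr hwx (fun e he => h e (Finset.mem_union_right _ he))])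
    (fun i hi j hj hne a hai haj => by
      obtain ⟨hvi, hwi⟩ := hmem i hi
      obtain ⟨hvj, hwj⟩ := hmem j hj
      rw [Finset.mem_union, mem_Af, mem_Af] at hai haj
      rcases hai with (h | h) | (h | h) <;> rcases haj with (h' | h') | (h' | h') <;>
        rw [h] at h' <;> simp only [Prod.ext_iff] at h' <;> simp_all)
    (fun x hx => by
      obtain ⟨hvx, hwx⟩ := hmem x hx
      have hsplit : ∑ ω : Ed m → Bool, F x ω
          = (∑ ω : Ed m → Bool, hh (ed ω v x) * hh (ed ω w x))
            + (∑ ω : Ed m → Bool, hh (ed ω v x) / 2)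
            + (∑ ω : Ed m → Bool, hh (ed ω w x) / 2) := by
        simp only [hF]
        rw [← Finset.sum_add_distrib, ← Finset.sum_add_distrib]
      rw [hsplit]
      have h1 : ∑ ω : Ed m → Bool, hh (ed ω v x) * hh (ed ω w x) = 0 := by
        refine sum_flip_eq_zero (pe v x hvx) _ fun ω => ?_
        rw [ed_flip_self ω hvx, ed_flip_other ω hwx (pe_ne_pe hvx hwx hvw), hh_not]
        ring
      have h2 : ∑ ω : Ed m → Bool, hh (ed ω v x) / 2 = 0 := by
        refine sum_flip_eq_zero (pe v x hvx) _ fun ω => ?_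
        rw [ed_flip_self ω hvx, hh_not]
        ring
      have h3 : ∑ ω : Ed m → Bool, hh (ed ω w x) / 2 = 0 := by
        refine sum_flip_eq_zero (pe w x hwx) _ fun ω => ?_
        rw [ed_flip_self ω hwx, hh_not]
        ring
      rw [h1, h2, h3]
      ring)
    (fun x hx ω => by
      rw [hFval]
      cases h : (ed ω v x && ed ω w x) <;> rw [abs_le] <;> constructor <;> norm_num)
    lam t hlam hlb
  refine hbnd.trans ?_
  rw [hcard]
  have : ((m - 2 : ℕ) : ℝ) = (m:ℝ) - 2 := by push_cast [hm]; ring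
  rw [this]

open Classical in
lemma card_badEST (S T : Set (Fin m)) (lam t : ℝ) (hlam : 0 ≤ lam) (hlb : lam ≤ 1) :
    ((Finset.univ.filter (fun ω : Ed m → Bool =>
        ¬ |(interCount (Gg ω) S T : ℝ) - (∑ e : Ed m, aw S T e) / 2| ≤ t)).card : ℝ)
      ≤ 2 * (2 ^ Fintype.card (Ed m)
          * Real.exp (lam ^ 2 * (Fintype.card (Ed m)) - lam * t)) := by
  classical
  set F : Ed m → (Ed m → Bool) → ℝ := fun e ω => aw S T e * hh (ω e) with hF
  have hsum : ∀ ω : Ed m → Bool, ∑ e : Ed m, F e ω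
      = (interCount (Gg ω) S T : ℝ) - (∑ e : Ed m, aw S T e) / 2 := by
    intro ω
    rw [inter_eq]
    have : ∀ e : Ed m, F e ω = (if ω e then aw S T e else 0) - aw S T e / 2 := by
      intro e
      simp only [hF]
      cases h : ω e <;> simp [hh, h] <;> ring
    rw [Finset.sum_congr rfl (fun e _ => this e), Finset.sum_sub_distrib]
    rw [← Finset.sum_div]
  have hfilter : (Finset.univ.filter (fun ω : Ed m → Bool =>
      ¬ |(interCount (Gg ω) S T : ℝ) - (∑ e : Ed m, aw S T e) / 2| ≤ t))
      = (Finset.univ.filter (fun ω : Ed m → Bool => ¬ |∑ e : Ed m, F e ω| ≤ t)) := by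
    refine Finset.filter_congr fun ω _ => ?_
    rw [hsum ω]
  rw [hfilter]
  have hbnd := chernoff_two Finset.univ (fun e => {e}) F
    (fun e he ω₁ ω₂ h => by
      simp only [hF]
      rw [h e (Finset.mem_singleton_self e)])
    (fun i hi j hj hne a hai haj => by
      rw [Finset.mem_singleton] at hai haj
      exact hne (hai ▸ haj ▸ rfl))
    (fun e he => by
      refine sum_flip_eq_zero e _ fun ω => ?_
      simp only [hF]
      rw [flip_self, hh_not]
      ring)
    (fun e he ω => by
      simp only [hF]
      rw [abs_mul, abs_of_nonneg (aw_nonneg S T e)]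
      calc aw S T e * |hh (ω e)| ≤ 2 * (1/2) :=
        mul_le_mul (aw_le_two S T e) (abs_hh _) (abs_nonneg _) (by norm_num)
      _ = 1 := by norm_num)
    lam t hlam hlb
  refine hbnd.trans ?_
  rw [Finset.card_univ]

/-! ### numeric helpers -/

lemma exp_poly (y : ℝ) (hy : 0 ≤ y) : (y / 15) ^ (15:ℕ) ≤ Real.exp y := by
  have h := Real.add_one_le_exp (y / 15)
  calc (y/15) ^ (15:ℕ) ≤ (y/15 + 1) ^ (15:ℕ) := by
        refine pow_le_pow_left₀ (by positivity) (by linarith) 15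
    _ ≤ (Real.exp (y/15)) ^ (15:ℕ) := by
        refine pow_le_pow_left₀ (by positivity) h 15
    _ = Real.exp ((15:ℕ) * (y/15)) := (Real.exp_nat_mul _ 15).symm
    _ = Real.exp y := by rw [show ((15:ℕ):ℝ) * (y/15) = y by push_cast; ring]

variable {n : ℕ}

lemma num_cast (hn : 10 ^ 50 ≤ n) : (10:ℝ) ^ 50 ≤ (n:ℝ) := by
  exact_mod_cast hn

lemma num02 (hn : 10 ^ 50 ≤ n) : (128:ℝ) ≤ (n:ℝ) ^ (0.2:ℝ) := by
  have hbase : ((128:ℝ) ^ (5:ℕ)) ≤ (n:ℝ) := by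
    refine le_trans ?_ (num_cast hn)
    norm_num
  have h128 : (128:ℝ) = ((128:ℝ) ^ (5:ℕ)) ^ (0.2:ℝ) := by
    rw [← Real.rpow_natCast (128:ℝ) 5, ← Real.rpow_mul (by norm_num)]
    norm_num
  rw [h128]
  exact Real.rpow_le_rpow (by positivity) hbase (by norm_num)

lemma num1le (hn : 10 ^ 50 ≤ n) : (1:ℝ) ≤ (n:ℝ) := by
  have := num_cast hn; nlinarith

lemma numpos (hn : 10 ^ 50 ≤ n) : (0:ℝ) < (n:ℝ) := lt_of_lt_of_le one_pos (num1le hn)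

lemma num06 (hn : 10 ^ 50 ≤ n) : (4:ℝ) ≤ (n:ℝ) ^ (0.6:ℝ) := by
  have h1 : (n:ℝ) ^ (0.2:ℝ) ≤ (n:ℝ) ^ (0.6:ℝ) :=
    Real.rpow_le_rpow_of_exponent_le (num1le hn) (by norm_num)
  have := num02 hn
  linarith

lemma numA (hn : 10 ^ 50 ≤ n) : 24 * (n:ℝ) ^ 2 ≤ Real.exp ((n:ℝ) ^ (0.2:ℝ) / 32) := by
  have h1 : ((n:ℝ) ^ (0.2:ℝ)) ^ (15:ℕ) = (n:ℝ) ^ (3:ℕ) := by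
    rw [← Real.rpow_natCast ((n:ℝ) ^ (0.2:ℝ)) 15, ← Real.rpow_mul (Nat.cast_nonneg n),
      ← Real.rpow_natCast (n:ℝ) 3]
    norm_num
  have hn' : 24 * (480:ℝ) ^ (15:ℕ) ≤ (n:ℝ) := by
    refine le_trans ?_ (num_cast hn)
    norm_num
  calc 24 * (n:ℝ) ^ 2 ≤ (n:ℝ) ^ (3:ℕ) / 480 ^ (15:ℕ) := by
        rw [le_div_iff₀ (by positivity)]
        have h2 : (24 * (480:ℝ) ^ (15:ℕ)) * (n:ℝ)^2 ≤ (n:ℝ) * (n:ℝ)^2 :=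
          mul_le_mul_of_nonneg_right hn' (sq_nonneg _)
        nlinarith
    _ = (((n:ℝ) ^ (0.2:ℝ) / 32) / 15) ^ (15:ℕ) := by
        rw [div_div, show (32:ℝ) * 15 = 480 by norm_num, div_pow, h1]
    _ ≤ Real.exp ((n:ℝ) ^ (0.2:ℝ) / 32) := exp_poly _ (by positivity)

lemma numB (hn : 10 ^ 50 ≤ n) :
    4 * (4:ℝ) ^ (2 * n - 1 : ℕ) ≤ Real.exp ((n:ℝ) ^ (1.2:ℝ) / 16) := by
  have hpos := numpos hn
  have e1 : (2:ℝ) ≤ Real.exp 1 := by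
    have := Real.add_one_le_exp (1:ℝ); linarith
  have e2 : (4:ℝ) ≤ Real.exp 2 := by
    have h : Real.exp 2 = Real.exp 1 * Real.exp 1 := by
      rw [← Real.exp_add]; norm_num
    nlinarith
  have hpow : (4:ℝ) ^ (2 * n - 1 : ℕ) ≤ (Real.exp 2) ^ (2 * n - 1 : ℕ) :=
    pow_le_pow_left₀ (by norm_num) e2 _
  have hexp : (Real.exp 2) ^ (2 * n - 1 : ℕ) = Real.exp (((2 * n - 1 : ℕ) : ℝ) * 2) := by
    rw [Real.exp_nat_mul]
  have hcast : ((2 * n - 1 : ℕ) : ℝ) = 2 * (n:ℝ) - 1 := by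
    have h1 : 1 ≤ 2 * n := by
      have : 1 ≤ n := le_trans (by norm_num) hn
      omega
    push_cast [h1]
    ring
  have h12 : (n:ℝ) ^ (1.2:ℝ) = (n:ℝ) ^ (1:ℝ) * (n:ℝ) ^ (0.2:ℝ) := by
    rw [← Real.rpow_add hpos]; norm_num
  have h02 := num02 hn
  have harg : 2 + ((2 * n - 1 : ℕ) : ℝ) * 2 ≤ (n:ℝ) ^ (1.2:ℝ) / 16 := by
    rw [hcast, h12, Real.rpow_one]
    have : 128 * (n:ℝ) ≤ (n:ℝ) * (n:ℝ) ^ (0.2:ℝ) := by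
      have := mul_le_mul_of_nonneg_left h02 (le_of_lt hpos)
      linarith [this]
    have hn1 := num1le hn
    nlinarith
  calc 4 * (4:ℝ) ^ (2 * n - 1 : ℕ)
      ≤ Real.exp 2 * Real.exp (((2 * n - 1 : ℕ) : ℝ) * 2) := by
        rw [← hexp]
        have h4pos : (0:ℝ) ≤ (4:ℝ) ^ (2 * n - 1 : ℕ) := by positivity
        nlinarith [hpow, Real.exp_pos 2]
    _ = Real.exp (2 + ((2 * n - 1 : ℕ) : ℝ) * 2) := by rw [← Real.exp_add]
    _ ≤ Real.exp ((n:ℝ) ^ (1.2:ℝ) / 16) := Real.exp_le_exp.mpr harg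

open Classical in
lemma aw_diag_bounds (S T : Set (Fin m)) :
    0 ≤ (S.ncard : ℝ) * T.ncard - ∑ e : Ed m, aw S T e ∧
      (S.ncard : ℝ) * T.ncard - ∑ e : Ed m, aw S T e ≤ (m:ℝ) := by
  have hsum := sum_aw (m := m) S T
  have hval : (S.ncard : ℝ) * T.ncard - ∑ e : Ed m, aw S T e
      = ∑ x : Fin m, ((if x ∈ S then (1:ℝ) else 0) * (if x ∈ T then (1:ℝ) else 0)) := by
    rw [hsum]; ring
  constructor
  · rw [hval]
    refine Finset.sum_nonneg fun x _ => ?_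
    split_ifs <;> norm_num
  · rw [hval]
    calc ∑ x : Fin m, ((if x ∈ S then (1:ℝ) else 0) * (if x ∈ T then (1:ℝ) else 0))
        ≤ ∑ _x : Fin m, (1:ℝ) := by
          refine Finset.sum_le_sum fun x _ => ?_
          split_ifs <;> norm_num
      _ = (m:ℝ) := by
          rw [Finset.sum_const, Finset.card_univ, Fintype.card_fin, nsmul_eq_mul, mul_one]

open Classical in
lemma card_badDeg' (hm : 1 ≤ m) (v : Fin m) (lam t : ℝ) (hlam : 0 ≤ lam) (hlb : lam ≤ 1)
    (B : Finset (Ed m → Bool))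
    (hB : ∀ ω ∈ B, ¬ |(degCount (Gg ω) v : ℝ) - ((m:ℝ) - 1) / 2| ≤ t) :
    (B.card : ℝ)
      ≤ 2 * (2 ^ Fintype.card (Ed m) * Real.exp (lam ^ 2 * ((m:ℝ) - 1) - lam * t)) := by
  refine le_trans ?_ (card_badDeg hm v lam t hlam hlb)
  have : B ⊆ Finset.univ.filter (fun ω : Ed m → Bool =>
      ¬ |(degCount (Gg ω) v : ℝ) - ((m:ℝ) - 1) / 2| ≤ t) :=
    fun ω hω => Finset.mem_filter.mpr ⟨Finset.mem_univ _, hB ω hω⟩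
  exact_mod_cast Finset.card_le_card this

open Classical in
lemma card_badCodeg' (hm : 2 ≤ m) (v w : Fin m) (hvw : v ≠ w) (lam t : ℝ)
    (hlam : 0 ≤ lam) (hlb : lam ≤ 1) (B : Finset (Ed m → Bool))
    (hB : ∀ ω ∈ B, ¬ |(codegCount (Gg ω) v w : ℝ) - ((m:ℝ) - 2) / 4| ≤ t) :
    (B.card : ℝ)
      ≤ 2 * (2 ^ Fintype.card (Ed m) * Real.exp (lam ^ 2 * ((m:ℝ) - 2) - lam * t)) := by
  refine le_trans ?_ (card_badCodeg hm v w hvw lam t hlam hlb)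
  have : B ⊆ Finset.univ.filter (fun ω : Ed m → Bool =>
      ¬ |(codegCount (Gg ω) v w : ℝ) - ((m:ℝ) - 2) / 4| ≤ t) :=
    fun ω hω => Finset.mem_filter.mpr ⟨Finset.mem_univ _, hB ω hω⟩
  exact_mod_cast Finset.card_le_card this

open Classical in
lemma card_badEST' (S T : Set (Fin m)) (lam t : ℝ) (hlam : 0 ≤ lam) (hlb : lam ≤ 1)
    (B : Finset (Ed m → Bool))
    (hB : ∀ ω ∈ B, ¬ |(interCount (Gg ω) S T : ℝ) - (∑ e : Ed m, aw S T e) / 2| ≤ t) :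
    (B.card : ℝ) ≤ 2 * (2 ^ Fintype.card (Ed m)
        * Real.exp (lam ^ 2 * (Fintype.card (Ed m)) - lam * t)) := by
  refine le_trans ?_ (card_badEST S T lam t hlam hlb)
  have : B ⊆ Finset.univ.filter (fun ω : Ed m → Bool =>
      ¬ |(interCount (Gg ω) S T : ℝ) - (∑ e : Ed m, aw S T e) / 2| ≤ t) :=
    fun ω hω => Finset.mem_filter.mpr ⟨Finset.mem_univ _, hB ω hω⟩
  exact_mod_cast Finset.card_le_card this

end PRG

set_option maxHeartbeats 2000000

open PRG

/-- For all sufficiently large `n` there exists a graph on `2n-1` vertices with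
all degrees within `n^0.6` of `n`, all codegrees within `n^0.6` of `n/2`, and
`|e(S,T) - |S||T|/2| ≤ n^1.6` for all vertex sets `S`, `T`. -/
theorem pseudorandom_graph_exists :
    ∃ n0 : ℕ, ∀ n : ℕ, n0 ≤ n →
    ∃ G : SimpleGraph (Fin (2 * n - 1)),
      (∀ v, |(degCount G v : ℝ) - n| ≤ (n : ℝ) ^ (0.6 : ℝ)) ∧
      (∀ v w, v ≠ w → |(codegCount G v w : ℝ) - n / 2| ≤ (n : ℝ) ^ (0.6 : ℝ)) ∧
      (∀ S T : Set (Fin (2 * n - 1)),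
        |(interCount G S T : ℝ) - S.ncard * T.ncard / 2| ≤ (n : ℝ) ^ (1.6 : ℝ)) := by
  refine ⟨10 ^ 50, fun n hn => ?_⟩
  have hn1 : 1 ≤ n := le_trans (by norm_num) hn
  have hpos := numpos hn
  have h1le := num1le hn
  have h02 := num02 hn
  have h06 := num06 hn
  set m : ℕ := 2 * n - 1 with hmdef
  have hm1 : 1 ≤ m := by omega
  have hm2 : 2 ≤ m := by omega
  have hmcast : (m:ℝ) = 2 * (n:ℝ) - 1 := by
    rw [hmdef, Nat.cast_sub (by omega : 1 ≤ 2 * n)]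
    push_cast
    ring
  -- parameters
  set lam : ℝ := (n:ℝ) ^ (-(0.4:ℝ)) / 8 with hlamdef
  set t1 : ℝ := (n:ℝ) ^ (0.6:ℝ) / 2 with ht1def
  set t3 : ℝ := (n:ℝ) ^ (1.6:ℝ) - (n:ℝ) with ht3def
  have hlam0 : 0 ≤ lam := by rw [hlamdef]; positivity
  have hlam1 : lam ≤ 1 := by
    rw [hlamdef]
    have : (n:ℝ) ^ (-(0.4:ℝ)) ≤ 1 :=
      Real.rpow_le_one_of_one_le_of_nonpos h1le (by norm_num)
    linarith
  -- rpow identities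
  have hA : (n:ℝ) ^ (-(0.4:ℝ)) * (n:ℝ) ^ (-(0.4:ℝ)) * (n:ℝ) = (n:ℝ) ^ (0.2:ℝ) := by
    rw [← Real.rpow_add hpos, ← Real.rpow_add_one (ne_of_gt hpos)]
    norm_num
  have hB : (n:ℝ) ^ (-(0.4:ℝ)) * (n:ℝ) ^ (0.6:ℝ) = (n:ℝ) ^ (0.2:ℝ) := by
    rw [← Real.rpow_add hpos]; norm_num
  have hC : (n:ℝ) ^ (-(0.4:ℝ)) * (n:ℝ) ^ (-(0.4:ℝ)) * (n:ℝ) ^ (2:ℕ) = (n:ℝ) ^ (1.2:ℝ) := by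
    rw [← Real.rpow_natCast (n:ℝ) 2, ← Real.rpow_add hpos, ← Real.rpow_add hpos]
    norm_num
  have hD : (n:ℝ) ^ (-(0.4:ℝ)) * (n:ℝ) ^ (1.6:ℝ) = (n:ℝ) ^ (1.2:ℝ) := by
    rw [← Real.rpow_add hpos]; norm_num
  have hE : (n:ℝ) ^ (-(0.4:ℝ)) * (n:ℝ) = (n:ℝ) ^ (0.6:ℝ) := by
    rw [← Real.rpow_add_one (ne_of_gt hpos)]; norm_num
  -- card of Ed
  have hEd2 : (Fintype.card (Ed m) : ℝ) ≤ 2 * (n:ℝ) ^ (2:ℕ) := by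
    have h := two_card_Ed (m := m)
    have hmm : m ≤ m * m := Nat.le_mul_of_pos_left m (by omega)
    have hcast : (2:ℝ) * (Fintype.card (Ed m) : ℝ) = (m:ℝ) * m - m := by
      have := congrArg (fun k : ℕ => (k : ℝ)) h
      push_cast [Nat.cast_sub hmm] at this
      linarith
    rw [hmcast] at hcast
    nlinarith [h1le]
  -- exponent bounds
  have hexp1 : ∀ c : ℝ, c ≤ 2 * (n:ℝ) → lam ^ 2 * c - lam * t1 ≤ -((n:ℝ) ^ (0.2:ℝ) / 32) := by
    intro c hc
    have hid : lam ^ 2 * (2 * (n:ℝ)) - lam * t1 = -((n:ℝ) ^ (0.2:ℝ) / 32) := by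
      rw [hlamdef, ht1def]
      linear_combination hA / 32 - hB / 16
    nlinarith [sq_nonneg lam]
  have hexp3 : lam ^ 2 * (Fintype.card (Ed m) : ℝ) - lam * t3 ≤ -((n:ℝ) ^ (1.2:ℝ) / 16) := by
    have hid : lam ^ 2 * (2 * (n:ℝ) ^ (2:ℕ)) - lam * t3
        = -(3/32) * (n:ℝ) ^ (1.2:ℝ) + (1/8) * (n:ℝ) ^ (0.6:ℝ) := by
      rw [hlamdef, ht3def]
      linear_combination hC / 32 - hD / 8 + hE / 8
    have h612 : 4 * (n:ℝ) ^ (0.6:ℝ) ≤ (n:ℝ) ^ (1.2:ℝ) := by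
      have hsq : (n:ℝ) ^ (0.6:ℝ) * (n:ℝ) ^ (0.6:ℝ) = (n:ℝ) ^ (1.2:ℝ) := by
        rw [← Real.rpow_add hpos]; norm_num
      nlinarith [hsq, h06, Real.rpow_nonneg (Nat.cast_nonneg n) (0.6:ℝ)]
    nlinarith [sq_nonneg lam, hEd2]
  -- abbreviations for bounds
  set N : ℝ := 2 ^ Fintype.card (Ed m) with hNdef
  have hN0 : (0:ℝ) < N := by rw [hNdef]; positivity
  set X1 : ℝ := 2 * (N * Real.exp (-((n:ℝ) ^ (0.2:ℝ) / 32))) with hX1def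
  set X3 : ℝ := 2 * (N * Real.exp (-((n:ℝ) ^ (1.2:ℝ) / 16))) with hX3def
  have hX1pos : 0 < X1 := by rw [hX1def]; positivity
  have hX3pos : 0 < X3 := by rw [hX3def]; positivity
  -- the bad events
  set Bdeg : Fin m → Finset (Ed m → Bool) := fun v =>
    Finset.univ.filter (fun ω =>
      ¬ |(degCount (Gg ω) v : ℝ) - ((m:ℝ) - 1) / 2| ≤ t1) with hBdegdef
  set Bco : Fin m × Fin m → Finset (Ed m → Bool) := fun p =>
    if p.1 = p.2 then ∅ else
      Finset.univ.filter (fun ω =>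
        ¬ |(codegCount (Gg ω) p.1 p.2 : ℝ) - ((m:ℝ) - 2) / 4| ≤ t1) with hBcodef
  set Best : Set (Fin m) × Set (Fin m) → Finset (Ed m → Bool) := fun q =>
    Finset.univ.filter (fun ω =>
      ¬ |(interCount (Gg ω) q.1 q.2 : ℝ) - (∑ e : Ed m, aw q.1 q.2 e) / 2| ≤ t3) with hBestdef
  -- cardinality bound for each bad event
  have hbdeg : ∀ v : Fin m, ((Bdeg v).card : ℝ) ≤ X1 := by
    intro v
    have h := card_badDeg' hm1 v lam t1 hlam0 hlam1 (Bdeg v)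
      (fun ω hω => by
        rw [hBdegdef, Finset.mem_filter] at hω
        exact hω.2)
    refine h.trans ?_
    rw [hX1def, hNdef]
    have hle := hexp1 ((m:ℝ) - 1) (by rw [hmcast]; linarith)
    have := Real.exp_le_exp.mpr hle
    nlinarith [Real.exp_pos (lam ^ 2 * ((m:ℝ) - 1) - lam * t1), hN0]
  have hbco : ∀ p : Fin m × Fin m, ((Bco p).card : ℝ) ≤ X1 := by
    intro p
    by_cases hp : p.1 = p.2
    · rw [hBcodef]
      simp only [if_pos hp, Finset.card_empty]
      exact_mod_cast le_of_lt hX1pos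
    · have h := card_badCodeg' hm2 p.1 p.2 hp lam t1 hlam0 hlam1 (Bco p)
        (fun ω hω => by
          rw [hBcodef] at hω
          simp only [if_neg hp, Finset.mem_filter] at hω
          exact hω.2)
      refine h.trans ?_
      rw [hX1def, hNdef]
      have hle := hexp1 ((m:ℝ) - 2) (by rw [hmcast]; linarith)
      have := Real.exp_le_exp.mpr hle
      nlinarith [Real.exp_pos (lam ^ 2 * ((m:ℝ) - 2) - lam * t1), hN0]
  have hbest : ∀ q : Set (Fin m) × Set (Fin m), ((Best q).card : ℝ) ≤ X3 := by
    intro q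
    have h := card_badEST' q.1 q.2 lam t3 hlam0 hlam1 (Best q)
      (fun ω hω => by
        rw [hBestdef, Finset.mem_filter] at hω
        exact hω.2)
    refine h.trans ?_
    rw [hX3def, hNdef]
    have := Real.exp_le_exp.mpr hexp3
    nlinarith [Real.exp_pos (lam ^ 2 * ((Fintype.card (Ed m)):ℝ) - lam * t3), hN0]
  -- assembling the union bound
  set Bad : Finset (Ed m → Bool) :=
    (Finset.univ.biUnion Bdeg ∪ Finset.univ.biUnion Bco) ∪ Finset.univ.biUnion Best with hBaddef
  have hcardBad : (Bad.card : ℝ) < N := by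
    have hsplit : (Bad.card : ℕ) ≤ ∑ v : Fin m, (Bdeg v).card
        + ∑ p : Fin m × Fin m, (Bco p).card
        + ∑ q : Set (Fin m) × Set (Fin m), (Best q).card := by
      rw [hBaddef]
      calc ((Finset.univ.biUnion Bdeg ∪ Finset.univ.biUnion Bco)
            ∪ Finset.univ.biUnion Best).card
          ≤ (Finset.univ.biUnion Bdeg ∪ Finset.univ.biUnion Bco).card
            + (Finset.univ.biUnion Best).card := Finset.card_union_le _ _
        _ ≤ ((Finset.univ.biUnion Bdeg).card + (Finset.univ.biUnion Bco).card)
            + (Finset.univ.biUnion Best).card := by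
            have := Finset.card_union_le (Finset.univ.biUnion Bdeg) (Finset.univ.biUnion Bco)
            omega
        _ ≤ ∑ v : Fin m, (Bdeg v).card + ∑ p : Fin m × Fin m, (Bco p).card
            + ∑ q : Set (Fin m) × Set (Fin m), (Best q).card := by
            have h1 := Finset.card_biUnion_le (s := (Finset.univ : Finset (Fin m))) (t := Bdeg)
            have h2 := Finset.card_biUnion_le (s := (Finset.univ : Finset (Fin m × Fin m)))
              (t := Bco)
            have h3 := Finset.card_biUnion_le
              (s := (Finset.univ : Finset (Set (Fin m) × Set (Fin m)))) (t := Best)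
            omega
    have hsum1 : ∑ v : Fin m, ((Bdeg v).card : ℝ) ≤ (m:ℝ) * X1 := by
      calc ∑ v : Fin m, ((Bdeg v).card : ℝ) ≤ ∑ _v : Fin m, X1 :=
            Finset.sum_le_sum fun v _ => hbdeg v
        _ = (m:ℝ) * X1 := by
            rw [Finset.sum_const, Finset.card_univ, Fintype.card_fin, nsmul_eq_mul]
    have hsum2 : ∑ p : Fin m × Fin m, ((Bco p).card : ℝ) ≤ ((m:ℝ) * m) * X1 := by
      calc ∑ p : Fin m × Fin m, ((Bco p).card : ℝ) ≤ ∑ _p : Fin m × Fin m, X1 :=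
            Finset.sum_le_sum fun p _ => hbco p
        _ = ((m:ℝ) * m) * X1 := by
            rw [Finset.sum_const, Finset.card_univ, Fintype.card_prod, Fintype.card_fin]
            push_cast
            ring
    have hsum3 : ∑ q : Set (Fin m) × Set (Fin m), ((Best q).card : ℝ)
        ≤ ((4:ℝ) ^ m) * X3 := by
      calc ∑ q : Set (Fin m) × Set (Fin m), ((Best q).card : ℝ)
          ≤ ∑ _q : Set (Fin m) × Set (Fin m), X3 :=
            Finset.sum_le_sum fun q _ => hbest q
        _ = ((4:ℝ) ^ m) * X3 := by
            rw [Finset.sum_const, Finset.card_univ, Fintype.card_prod, Fintype.card_set,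
              Fintype.card_fin, nsmul_eq_mul]
            push_cast
            rw [← mul_pow]
            norm_num
    have hcast : (Bad.card : ℝ) ≤ ∑ v : Fin m, ((Bdeg v).card : ℝ)
        + ∑ p : Fin m × Fin m, ((Bco p).card : ℝ)
        + ∑ q : Set (Fin m) × Set (Fin m), ((Best q).card : ℝ) := by
      push_cast
      exact_mod_cast hsplit
    -- the numeric estimate
    have hnumA := numA hn
    have hnumB := numB hn
    have hprodA : 24 * (n:ℝ) ^ 2 * Real.exp (-((n:ℝ) ^ (0.2:ℝ) / 32)) ≤ 1 := by
      rw [Real.exp_neg, ← div_eq_mul_inv, div_le_one (Real.exp_pos _)]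
      exact hnumA
    have hprodB : 4 * (4:ℝ) ^ m * Real.exp (-((n:ℝ) ^ (1.2:ℝ) / 16)) ≤ 1 := by
      rw [Real.exp_neg, ← div_eq_mul_inv, div_le_one (Real.exp_pos _)]
      rw [hmdef]
      exact hnumB
    have hmlt : (m:ℝ) + (m:ℝ) * (m:ℝ) < 6 * (n:ℝ) ^ 2 := by
      rw [hmcast]
      nlinarith [h1le]
    have h1 : ((m:ℝ) + (m:ℝ) * (m:ℝ)) * X1 < 6 * (n:ℝ) ^ 2 * X1 :=
      mul_lt_mul_of_pos_right hmlt hX1pos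
    have h2 : 6 * (n:ℝ) ^ 2 * X1 ≤ N / 2 := by
      rw [hX1def]
      have he := Real.exp_pos (-((n:ℝ) ^ (0.2:ℝ) / 32))
      nlinarith [hN0, hprodA, he]
    have h3 : ((4:ℝ) ^ m) * X3 ≤ N / 2 := by
      rw [hX3def]
      have he := Real.exp_pos (-((n:ℝ) ^ (1.2:ℝ) / 16))
      have h4pos : (0:ℝ) < (4:ℝ) ^ m := by positivity
      nlinarith [hN0, hprodB, he]
    calc (Bad.card : ℝ)
        ≤ ∑ v : Fin m, ((Bdeg v).card : ℝ) + ∑ p : Fin m × Fin m, ((Bco p).card : ℝ)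
          + ∑ q : Set (Fin m) × Set (Fin m), ((Best q).card : ℝ) := hcast
      _ ≤ (m:ℝ) * X1 + ((m:ℝ) * m) * X1 + ((4:ℝ) ^ m) * X3 := by
          linarith [hsum1, hsum2, hsum3]
      _ < N := by linarith [h1, h2, h3]
  -- extract a good ω
  obtain ⟨ω, hω⟩ : ∃ ω : Ed m → Bool, ω ∉ Bad := by
    by_contra hc
    push_neg at hc
    have hsub : (Finset.univ : Finset (Ed m → Bool)) ⊆ Bad := fun ω _ => hc ω
    have hcard := Finset.card_le_card hsub
    rw [Finset.card_univ] at hcard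
    have hcard' : (Fintype.card (Ed m → Bool) : ℝ) ≤ (Bad.card : ℝ) := by exact_mod_cast hcard
    rw [card_om] at hcard'
    rw [← hNdef] at hcard'
    linarith [hcardBad]
  rw [hBaddef] at hω
  have hω1 : ∀ v : Fin m, ω ∉ Bdeg v := fun v hv =>
    hω (Finset.mem_union_left _ (Finset.mem_union_left _
      (Finset.mem_biUnion.mpr ⟨v, Finset.mem_univ _, hv⟩)))
  have hω2 : ∀ p : Fin m × Fin m, ω ∉ Bco p := fun p hp =>
    hω (Finset.mem_union_left _ (Finset.mem_union_right _
      (Finset.mem_biUnion.mpr ⟨p, Finset.mem_univ _, hp⟩)))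
  have hω3 : ∀ q : Set (Fin m) × Set (Fin m), ω ∉ Best q := fun q hq =>
    hω (Finset.mem_union_right _ (Finset.mem_biUnion.mpr ⟨q, Finset.mem_univ _, hq⟩))
  refine ⟨Gg ω, ?_, ?_, ?_⟩
  · -- degrees
    intro v
    have h := hω1 v
    rw [hBdegdef] at h
    simp only [Finset.mem_filter, Finset.mem_univ, true_and, not_not] at h
    have hcen : ((m:ℝ) - 1) / 2 = (n:ℝ) - 1 := by rw [hmcast]; ring
    rw [hcen] at h
    have habs := abs_le.mp h
    rw [abs_le]
    constructor
    · linarith [habs.1, h06, ht1def.le, ht1def.ge]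
    · linarith [habs.2, h06, ht1def.le, ht1def.ge]
  · -- codegrees
    intro v w hvw
    have h : |(codegCount (Gg ω) v w : ℝ) - ((m:ℝ) - 2) / 4| ≤ t1 := by
      by_contra hcon
      refine hω2 (v, w) ?_
      have heq : Bco (v, w) = Finset.univ.filter (fun ω =>
          ¬ |(codegCount (Gg ω) v w : ℝ) - ((m:ℝ) - 2) / 4| ≤ t1) := by
        rw [hBcodef]
        exact if_neg hvw
      rw [heq]
      exact Finset.mem_filter.mpr ⟨Finset.mem_univ _, hcon⟩
    have hcen : ((m:ℝ) - 2) / 4 = (n:ℝ) / 2 - 3 / 4 := by rw [hmcast]; ring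
    rw [hcen] at h
    have habs := abs_le.mp h
    rw [abs_le]
    constructor
    · linarith [habs.1, h06, ht1def.le, ht1def.ge]
    · linarith [habs.2, h06, ht1def.le, ht1def.ge]
  · -- e(S,T)
    intro S T
    have h := hω3 (S, T)
    rw [hBestdef] at h
    simp only [Finset.mem_filter, Finset.mem_univ, true_and, not_not] at h
    have habs := abs_le.mp h
    obtain ⟨hd0, hdm⟩ := aw_diag_bounds S T
    rw [abs_le]
    constructor
    · linarith [habs.1, hmcast.le, hmcast.ge, ht3def.le, ht3def.ge, hpos]
    · linarith [habs.2, hmcast.le, hmcast.ge, ht3def.le, ht3def.ge, hpos]
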